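/- Upper bound on the l-effective dimension under polynomial eigenvalue decay: Let (μ_i)_{i≥1} be a nonincreasing sequence of positive reals and let p ∈ (0,1], l ≥ 1 with p < l. If μ_i ≤ D₂ i^{−1/p} for all i ≥ 1 and some constant D₂ > 0, then for every λ ∈ (0,1], N_l(λ) := Σ_{i≥1} (μ_i/(μ_i+λ))^l ≤ c_{2,l} λ^{−p}, where c_{2,l} = 1 + D₂^l · p/(l−p). -/

import Mathlib

open scoped ENNReal
open Set MeasureTheory

/-- Upper bound on the `l`-effective dimension `N_l(λ) = Σ_i (μ_i/(μ_i+λ))^l`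
under the polynomial eigenvalue decay `μ_i ≤ D₂ i^{-1/p}`. -/
theorem effective_dimension_upper_bound
    (μ : ℕ → ℝ) (p l D₂ : ℝ)
    (hp0 : 0 < p) (hp1 : p ≤ 1) (hl : 1 ≤ l) (hpl : p < l)
    (hμpos : ∀ i, 0 < μ i) (hμanti : Antitone μ)
    (hD₂ : 0 < D₂)
    (hEVD : ∀ i : ℕ, μ i ≤ D₂ * ((i : ℝ) + 1) ^ (-(1 / p)))
    (lam : ℝ) (hlam0 : 0 < lam) (hlam1 : lam ≤ 1) :
    ∑' i : ℕ, ENNReal.ofReal ((μ i / (μ i + lam)) ^ l)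
      ≤ ENNReal.ofReal ((1 + D₂ ^ l * (p / (l - p))) * lam ^ (-p)) := by
  have hl0 : 0 < l := lt_of_lt_of_le one_pos hl
  set s : ℝ := l / p with hs
  set c : ℝ := D₂ ^ l * lam ^ (-l) with hc
  set T : ℝ := lam ^ (-p) with hT
  have hs1 : 1 < s := (one_lt_div hp0).2 hpl
  have hT0 : 0 < T := Real.rpow_pos_of_pos hlam0 _
  have hc0 : 0 < c := mul_pos (Real.rpow_pos_of_pos hD₂ _) (Real.rpow_pos_of_pos hlam0 _)
  set G : ℝ → ℝ≥0∞ := fun x => ENNReal.ofReal (min 1 (c * x ^ (-s))) with hG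
  -- Step A: pointwise bound
  have stepA : ∀ i : ℕ, ENNReal.ofReal ((μ i / (μ i + lam)) ^ l)
      ≤ ENNReal.ofReal (min 1 (c * ((i : ℝ) + 1) ^ (-s))) := by
    intro i
    apply ENNReal.ofReal_le_ofReal
    have hμi := hμpos i
    have hi1 : (0:ℝ) < (i : ℝ) + 1 := by positivity
    refine le_min ?_ ?_
    · apply Real.rpow_le_one (by positivity) _ hl0.le
      rw [div_le_one (by linarith)]; linarith
    · have h0 : μ i / (μ i + lam) ≤ D₂ * ((i:ℝ)+1) ^ (-(1/p)) / lam :=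
        div_le_div₀ (by positivity) (hEVD i) hlam0 (by linarith)
      have h1 : (μ i / (μ i + lam)) ^ l ≤ (D₂ * ((i:ℝ)+1) ^ (-(1/p)) / lam) ^ l :=
        Real.rpow_le_rpow (by positivity) h0 hl0.le
      refine h1.trans_eq ?_
      rw [Real.div_rpow (by positivity) hlam0.le,
        Real.mul_rpow hD₂.le (by positivity),
        ← Real.rpow_mul hi1.le]
      have hexp : (-(1/p)) * l = -s := by rw [hs]; field_simp
      rw [hexp, hc, Real.rpow_neg hlam0.le l]
      ring
  -- Step B: term i ≤ ∫⁻ over Ioc i (i+1)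
  have stepB : ∀ i : ℕ, ENNReal.ofReal (min 1 (c * ((i : ℝ) + 1) ^ (-s)))
      ≤ ∫⁻ x in Ioc (i : ℝ) ((i : ℝ) + 1), G x := by
    intro i
    have h1 : ENNReal.ofReal (min 1 (c * ((i : ℝ) + 1) ^ (-s)))
        = ∫⁻ _ in Ioc (i : ℝ) ((i : ℝ) + 1), ENNReal.ofReal (min 1 (c * ((i : ℝ) + 1) ^ (-s))) := by
      rw [setLIntegral_const, Real.volume_Ioc]
      norm_num
    rw [h1]
    refine setLIntegral_mono' measurableSet_Ioc (fun x hx => ?_)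
    apply ENNReal.ofReal_le_ofReal
    have hx0 : (0:ℝ) < x := lt_of_le_of_lt (Nat.cast_nonneg i) hx.1
    refine min_le_min le_rfl ?_
    have := Real.rpow_le_rpow_of_nonpos hx0 hx.2 (by linarith : -s ≤ 0)
    nlinarith [this, hc0]
  -- Step C: partition of Ioi 0
  have hUnion : (⋃ i : ℕ, Ioc (i : ℝ) ((i : ℝ) + 1)) = Ioi (0:ℝ) := by
    ext x
    simp only [mem_iUnion, mem_Ioc, mem_Ioi]
    constructor
    · rintro ⟨i, hi, -⟩
      exact lt_of_le_of_lt (Nat.cast_nonneg i) hi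
    · intro hx
      refine ⟨⌈x⌉₊ - 1, ?_, ?_⟩
      · have h1 : 1 ≤ ⌈x⌉₊ := Nat.one_le_ceil_iff.2 hx
        have h2 : (⌈x⌉₊ : ℝ) < x + 1 := Nat.ceil_lt_add_one hx.le
        have : ((⌈x⌉₊ - 1 : ℕ) : ℝ) = (⌈x⌉₊ : ℝ) - 1 := by
          push_cast [h1]; ring
        rw [this]; linarith
      · have h1 : 1 ≤ ⌈x⌉₊ := Nat.one_le_ceil_iff.2 hx
        have h2 : x ≤ (⌈x⌉₊ : ℝ) := Nat.le_ceil x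
        have : ((⌈x⌉₊ - 1 : ℕ) : ℝ) = (⌈x⌉₊ : ℝ) - 1 := by
          push_cast [h1]; ring
        rw [this]; linarith
  have hdisj : Pairwise (Function.onFun Disjoint fun i : ℕ => Ioc (i : ℝ) ((i : ℝ) + 1)) := by
    intro i j hij
    rcases hij.lt_or_gt with h | h
    · exact Set.Ioc_disjoint_Ioc.2 (by
        have : (i:ℝ) + 1 ≤ (j:ℝ) := by exact_mod_cast Nat.succ_le_of_lt h
        simp only [min_le_iff, le_max_iff]
        right; left; linarith)
    · exact Set.Ioc_disjoint_Ioc.2 (by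
        have : (j:ℝ) + 1 ≤ (i:ℝ) := by exact_mod_cast Nat.succ_le_of_lt h
        simp only [min_le_iff, le_max_iff]
        left; right; linarith)
  -- main chain
  calc ∑' i : ℕ, ENNReal.ofReal ((μ i / (μ i + lam)) ^ l)
      ≤ ∑' i : ℕ, ∫⁻ x in Ioc (i : ℝ) ((i : ℝ) + 1), G x :=
        ENNReal.tsum_le_tsum (fun i => (stepA i).trans (stepB i))
    _ = ∫⁻ x in Ioi (0:ℝ), G x := by
        rw [← lintegral_iUnion (fun i => measurableSet_Ioc) hdisj, hUnion]
    _ ≤ ENNReal.ofReal ((1 + D₂ ^ l * (p / (l - p))) * lam ^ (-p)) := by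
        rw [← Ioc_union_Ioi_eq_Ioi hT0.le,
          lintegral_union measurableSet_Ioi Set.Ioc_disjoint_Ioi_same]
        have piece1 : ∫⁻ x in Ioc (0:ℝ) T, G x ≤ ENNReal.ofReal T := by
          calc ∫⁻ x in Ioc (0:ℝ) T, G x ≤ ∫⁻ _ in Ioc (0:ℝ) T, 1 := by
                refine setLIntegral_mono' measurableSet_Ioc (fun x _ => ?_)
                exact ENNReal.ofReal_le_one.2 (min_le_left _ _)
            _ = ENNReal.ofReal T := by rw [setLIntegral_one, Real.volume_Ioc, sub_zero]
        have hint : IntegrableOn (fun x : ℝ => c * x ^ (-s)) (Ioi T) :=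
          (integrableOn_Ioi_rpow_of_lt (by linarith : -s < -1) hT0).const_mul c
        have piece2 : ∫⁻ x in Ioi T, G x
            ≤ ENNReal.ofReal (c * (T ^ (-s + 1) / (s - 1))) := by
          calc ∫⁻ x in Ioi T, G x ≤ ∫⁻ x in Ioi T, ENNReal.ofReal (c * x ^ (-s)) := by
                refine setLIntegral_mono' measurableSet_Ioi (fun x _ => ?_)
                exact ENNReal.ofReal_le_ofReal (min_le_right _ _)
            _ = ENNReal.ofReal (∫ x in Ioi T, c * x ^ (-s)) := by
                rw [ofReal_integral_eq_lintegral_ofReal hint]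
                filter_upwards [ae_restrict_mem measurableSet_Ioi] with x hx
                have hx0 : (0:ℝ) < x := hT0.trans hx
                positivity
            _ = ENNReal.ofReal (c * (T ^ (-s + 1) / (s - 1))) := by
                rw [MeasureTheory.integral_const_mul, integral_Ioi_rpow_of_lt (by linarith) hT0]
                congr 1
                rw [neg_div, ← div_neg]
                ring_nf
        calc (∫⁻ x in Ioc 0 T, G x) + ∫⁻ x in Ioi T, G x
            ≤ ENNReal.ofReal T + ENNReal.ofReal (c * (T ^ (-s + 1) / (s - 1))) :=
              add_le_add piece1 piece2
          _ = ENNReal.ofReal (T + c * (T ^ (-s + 1) / (s - 1))) := by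
              rw [ENNReal.ofReal_add hT0.le (mul_nonneg hc0.le (div_nonneg
                (Real.rpow_pos_of_pos hT0 _).le (by linarith)))]
          _ = ENNReal.ofReal ((1 + D₂ ^ l * (p / (l - p))) * lam ^ (-p)) := by
              congr 1
              have e1 : T ^ (-s + 1) = lam ^ (l - p) := by
                rw [hT, ← Real.rpow_mul hlam0.le]
                congr 1
                field_simp [hs]
                rw [hs, mul_add, mul_neg, mul_div_assoc', mul_div_cancel_left₀ l hp0.ne']
                ring
              have e2 : lam ^ (-l) * lam ^ (l - p) = lam ^ (-p) := by
                rw [← Real.rpow_add hlam0]; ring_nf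
              have e3 : (s - 1) = (l - p) / p := by rw [hs]; field_simp
              have hlp : l - p ≠ 0 := by linarith
              have e4 : c * (T ^ (-s + 1) / (s - 1)) = D₂ ^ l * (p / (l - p)) * lam ^ (-p) := by
                rw [e1, hc, e3]
                field_simp
                linear_combination e2
              rw [e4, hT]
              ring
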